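/- Let m be an odd integer with m ≥ 3 and let m₀ be the radical (largest squarefree divisor) of m. If the Möbius function satisfies μ(m₀) = 1, then for every integer q ≥ 2 one has (1 - 1/q) · q^{φ(m)} < Φ_m(q) < q^{φ(m)} < Φ_{2m}(q) < (1 - 1/q)^{-1} · q^{φ(m)}. -/

import Mathlib

set_option maxHeartbeats 1000000
open Finset ArithmeticFunction

private lemma weier2 (F : Finset ℕ) (t : ℕ → ℝ) (h0 : ∀ i ∈ F, 0 ≤ t i) (h1 : ∀ i ∈ F, t i ≤ 1) :
    ∏ i ∈ F, (1 - t i) ≤ 1 - (∑ i ∈ F, t i) + (∑ i ∈ F, t i) ^ 2 / 2 := by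
  classical
  induction F using Finset.cons_induction with
  | empty => simp
  | cons a F ha ih =>
    rw [Finset.prod_cons, Finset.sum_cons]
    have h0a : 0 ≤ t a := h0 a (Finset.mem_cons_self a F)
    have h1a : t a ≤ 1 := h1 a (Finset.mem_cons_self a F)
    have h0F : ∀ i ∈ F, 0 ≤ t i := fun i hi => h0 i (Finset.mem_cons_of_mem hi)
    have h1F : ∀ i ∈ F, t i ≤ 1 := fun i hi => h1 i (Finset.mem_cons_of_mem hi)
    have ihF := ih h0F h1F
    have hs : 0 ≤ ∑ i ∈ F, t i := Finset.sum_nonneg h0F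
    have hp0 : 0 ≤ ∏ i ∈ F, (1 - t i) :=
      Finset.prod_nonneg fun i hi => by linarith [h1F i hi]
    nlinarith [mul_le_mul_of_nonneg_left ihF (by linarith : (0:ℝ) ≤ 1 - t a),
      sq_nonneg (∑ i ∈ F, t i), mul_nonneg h0a hs, mul_nonneg (mul_nonneg h0a hs) hs]

private lemma weier1 (F : Finset ℕ) (t : ℕ → ℝ) (h0 : ∀ i ∈ F, 0 ≤ t i) (h1 : ∀ i ∈ F, t i ≤ 1) :
    1 - ∑ i ∈ F, t i ≤ ∏ i ∈ F, (1 - t i) := by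
  classical
  induction F using Finset.cons_induction with
  | empty => simp
  | cons a F ha ih =>
    rw [Finset.prod_cons, Finset.sum_cons]
    have h0a : 0 ≤ t a := h0 a (Finset.mem_cons_self a F)
    have h1a : t a ≤ 1 := h1 a (Finset.mem_cons_self a F)
    have h0F : ∀ i ∈ F, 0 ≤ t i := fun i hi => h0 i (Finset.mem_cons_of_mem hi)
    have h1F : ∀ i ∈ F, t i ≤ 1 := fun i hi => h1 i (Finset.mem_cons_of_mem hi)
    have ihF := ih h0F h1F
    have hs : 0 ≤ ∑ i ∈ F, t i := Finset.sum_nonneg h0F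
    nlinarith [mul_le_mul_of_nonneg_left ihF (by linarith : (0:ℝ) ≤ 1 - t a),
      mul_nonneg h0a hs]

private lemma weier3 (F : Finset ℕ) (t : ℕ → ℝ) (h0 : ∀ i ∈ F, 0 ≤ t i) :
    1 + ∑ i ∈ F, t i ≤ ∏ i ∈ F, (1 + t i) := by
  classical
  induction F using Finset.cons_induction with
  | empty => simp
  | cons a F ha ih =>
    rw [Finset.prod_cons, Finset.sum_cons]
    have h0a : 0 ≤ t a := h0 a (Finset.mem_cons_self a F)
    have h0F : ∀ i ∈ F, 0 ≤ t i := fun i hi => h0 i (Finset.mem_cons_of_mem hi)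
    have ihF := ih h0F
    have hs : 0 ≤ ∑ i ∈ F, t i := Finset.sum_nonneg h0F
    nlinarith [mul_le_mul_of_nonneg_left ihF (by linarith : (0:ℝ) ≤ 1 + t a),
      mul_nonneg h0a hs]

private lemma weier4 (F : Finset ℕ) (t : ℕ → ℝ) (h0 : ∀ i ∈ F, 0 ≤ t i) :
    (∏ i ∈ F, (1 + t i)) * (1 - ∑ i ∈ F, t i) ≤ 1 := by
  classical
  induction F using Finset.cons_induction with
  | empty => simp
  | cons a F ha ih =>
    rw [Finset.prod_cons, Finset.sum_cons]
    have h0a : 0 ≤ t a := h0 a (Finset.mem_cons_self a F)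
    have h0F : ∀ i ∈ F, 0 ≤ t i := fun i hi => h0 i (Finset.mem_cons_of_mem hi)
    have ihF := ih h0F
    have hs : 0 ≤ ∑ i ∈ F, t i := Finset.sum_nonneg h0F
    have hp1 : 1 ≤ ∏ i ∈ F, (1 + t i) := by
      calc (1:ℝ) = ∏ i ∈ F, 1 := by simp
        _ ≤ ∏ i ∈ F, (1 + t i) :=
          Finset.prod_le_prod (by simp) (fun i hi => by linarith [h0F i hi])
    have hP0 : (0:ℝ) ≤ ∏ i ∈ F, (1 + t i) := by linarith
    nlinarith [mul_nonneg hP0 (mul_nonneg h0a h0a), mul_nonneg hP0 (mul_nonneg h0a hs)]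

private lemma tail_sum (F : Finset ℕ) (L : ℕ) (w : ℝ) (hw0 : 0 < w) (hw : w ≤ 1/2)
    (hF : ∀ j ∈ F, L ≤ j) : ∑ j ∈ F, w ^ j ≤ 2 * w ^ L := by
  classical
  set N := (F.sup _root_.id) + 1 with hN
  have key : ∑ j ∈ F, w ^ j = w ^ L * ∑ i ∈ F.image (· - L), w ^ i := by
    rw [Finset.sum_image (by intro x hx y hy h; simp only at h; have := hF x hx; have := hF y hy; omega),
      Finset.mul_sum]
    refine Finset.sum_congr rfl fun j hj => ?_
    rw [← pow_add]
    congr 1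
    have := hF j hj; omega
  have hsub : F.image (· - L) ⊆ Finset.range N := by
    intro i hi
    simp only [Finset.mem_image] at hi
    obtain ⟨j, hj, rfl⟩ := hi
    have : j ≤ F.sup _root_.id := Finset.le_sup (f := _root_.id) hj
    simp [Finset.mem_range]; omega
  have h2 : ∑ i ∈ F.image (· - L), w ^ i ≤ ∑ i ∈ Finset.range N, w ^ i :=
    Finset.sum_le_sum_of_subset_of_nonneg hsub (fun i _ _ => by positivity)
  have h3 : ∑ i ∈ Finset.range N, w ^ i ≤ 2 := by
    have hg := geom_sum_mul w N
    have : (∑ i ∈ Finset.range N, w ^ i) * (1 - w) = 1 - w ^ N := by ring_nf; ring_nf at hg; linarith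
    have hwN : 0 < w ^ N := by positivity
    nlinarith
  have hwL : 0 ≤ w ^ L := by positivity
  calc ∑ j ∈ F, w ^ j = w ^ L * ∑ i ∈ F.image (· - L), w ^ i := key
    _ ≤ w ^ L * 2 := by
        apply mul_le_mul_of_nonneg_left _ hwL
        linarith
    _ = 2 * w ^ L := by ring

private lemma squarefree_prod_primes {s : Finset ℕ} (hs : ∀ p ∈ s, p.Prime) :
    Squarefree (∏ p ∈ s, p) := by
  classical
  induction s using Finset.cons_induction with
  | empty => simpa using squarefree_one
  | cons a s ha ih =>
    rw [Finset.prod_cons]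
    have hap : a.Prime := hs a (Finset.mem_cons_self a s)
    have hcop : Nat.Coprime a (∏ p ∈ s, p) := by
      apply Nat.Coprime.prod_right
      intro p hp
      exact (Nat.coprime_primes hap (hs p (Finset.mem_cons_of_mem hp))).2
        (by rintro rfl; exact ha hp)
    exact (Nat.squarefree_mul hcop).2 ⟨hap.squarefree, ih fun p hp => hs p (Finset.mem_cons_of_mem hp)⟩

private lemma moebius_pm {e : ℕ} (h : Squarefree e) :
    moebius e = 1 ∨ moebius e = -1 := by
  rw [moebius_apply_of_squarefree h]
  rcases Nat.even_or_odd (cardFactors e) with he | he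
  · left; exact he.neg_one_pow
  · right; exact he.neg_one_pow

private lemma coprime_div_of_squarefree {d m₀ : ℕ} (hm₀ : Squarefree m₀) (hd : d ∣ m₀) :
    Nat.Coprime d (m₀ / d) := by
  have hmul : d * (m₀ / d) = m₀ := Nat.mul_div_cancel' hd
  have : (Nat.gcd d (m₀ / d)) * (Nat.gcd d (m₀ / d)) ∣ m₀ := by
    have h2 : (Nat.gcd d (m₀ / d)) * (Nat.gcd d (m₀ / d)) ∣ d * (m₀ / d) :=
      mul_dvd_mul (Nat.gcd_dvd_left _ _) (Nat.gcd_dvd_right _ _)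
    rwa [hmul] at h2
  have := hm₀ _ this
  simpa [Nat.isUnit_iff] using this

private lemma moebius_div_flip {d m₀ : ℕ} (hm₀ : Squarefree m₀)
    (hmu : moebius m₀ = 1) (hd : d ∣ m₀) : moebius (m₀ / d) = moebius d := by
  have hcop := coprime_div_of_squarefree hm₀ hd
  have hmul : d * (m₀ / d) = m₀ := Nat.mul_div_cancel' hd
  have h1 : moebius d * moebius (m₀ / d) = 1 := by
    rw [← isMultiplicative_moebius.map_mul_of_coprime hcop, hmul, hmu]
  rcases Int.mul_eq_one_iff_eq_one_or_neg_one.1 h1 with ⟨ha, hb⟩ | ⟨ha, hb⟩ <;> rw [ha, hb]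

private lemma prod_moebius_split (m m₀ e₀ : ℕ) (hm : m ≠ 0) (hm₀ : Squarefree m₀)
    (hm₀m : ∀ d : ℕ, d ∣ m → Squarefree d → d ∣ m₀) (hdvd : m₀ ∣ m)
    (hmu : moebius m₀ = 1) (he₀ : m = e₀ * m₀)
    (v : ℕ → ℝ) :
    ∏ d ∈ m.divisors, v (m / d) ^ (moebius d) =
      (∏ e ∈ m₀.divisors.filter (fun e => moebius e = 1), v (e₀ * e)) /
      (∏ e ∈ m₀.divisors.filter (fun e => moebius e = -1), v (e₀ * e)) := by
  classical
  have hm₀0 : m₀ ≠ 0 := hm₀.ne_zero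
  have hsub : m₀.divisors ⊆ m.divisors := Nat.divisors_subset_of_dvd hm hdvd
  have step1 : ∏ d ∈ m.divisors, v (m / d) ^ (moebius d)
      = ∏ d ∈ m₀.divisors, v (m / d) ^ (moebius d) := by
    refine (Finset.prod_subset hsub fun d hd hnd => ?_).symm
    have hsf : ¬ Squarefree d := by
      intro hsf
      exact hnd (Nat.mem_divisors.2 ⟨hm₀m d (Nat.mem_divisors.1 hd).1 hsf, hm₀0⟩)
    rw [moebius_eq_zero_of_not_squarefree hsf, zpow_zero]
  have step2 : ∏ d ∈ m₀.divisors, v (m / d) ^ (moebius d)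
      = ∏ e ∈ m₀.divisors, v (e₀ * e) ^ (moebius e) := by
    rw [← Nat.prod_div_divisors m₀ (fun e => v (e₀ * e) ^ (moebius e))]
    refine Finset.prod_congr rfl fun d hd => ?_
    have hddvd : d ∣ m₀ := (Nat.mem_divisors.1 hd).1
    rw [moebius_div_flip hm₀ hmu hddvd, he₀, Nat.mul_div_assoc e₀ hddvd]
  have step3 : ∏ e ∈ m₀.divisors, v (e₀ * e) ^ (moebius e)
      = (∏ e ∈ m₀.divisors.filter (fun e => moebius e = 1), v (e₀ * e)) *
        (∏ e ∈ m₀.divisors.filter (fun e => moebius e = -1), v (e₀ * e))⁻¹ := by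
    rw [← Finset.prod_filter_mul_prod_filter_not m₀.divisors (fun e => moebius e = 1)]
    congr 1
    · exact Finset.prod_congr rfl fun e he => by
        rw [(Finset.mem_filter.1 he).2, zpow_one]
    · have hfil : m₀.divisors.filter (fun e => ¬ moebius e = 1)
          = m₀.divisors.filter (fun e => moebius e = -1) := by
        refine Finset.filter_congr fun e he => ?_
        have hsf : Squarefree e := hm₀.squarefree_of_dvd (Nat.mem_divisors.1 he).1
        rcases moebius_pm hsf with h | h <;> simp [h]
      rw [hfil, ← Finset.prod_inv_distrib]
      refine Finset.prod_congr rfl fun e he => ?_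
      rw [(Finset.mem_filter.1 he).2]
      simp [zpow_neg]
  rw [step1, step2, step3, div_eq_mul_inv]



private lemma cyclotomic_eval_eq_prod (Q : ℝ) (hQ : 1 < Q) (n : ℕ) (hn : 0 < n) :
    (Polynomial.cyclotomic n ℝ).eval Q = ∏ d ∈ n.divisors, (Q ^ (n / d) - 1) ^ (moebius d) := by
  have hf : ∀ k : ℕ, 0 < k → (Polynomial.cyclotomic k ℝ).eval Q ≠ 0 := fun k _ =>
    (Polynomial.cyclotomic_pos' k hQ).ne'
  have hg : ∀ k : ℕ, 0 < k → Q ^ k - 1 ≠ 0 := fun k hk =>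
    sub_ne_zero.2 (one_lt_pow₀ hQ hk.ne').ne'
  have hprod : ∀ k > 0, ∏ i ∈ k.divisors, (Polynomial.cyclotomic i ℝ).eval Q = Q ^ k - 1 := by
    intro k hk
    rw [← Polynomial.eval_prod, Polynomial.prod_cyclotomic_eq_X_pow_sub_one hk]
    simp
  have h := (prod_eq_iff_prod_pow_moebius_eq_of_nonzero hf hg).1 hprod n hn
  rw [← h, Nat.prod_divisorsAntidiagonal (fun d e => (Q ^ e - 1) ^ (moebius d))]

private lemma divisors_two_mul_odd {m : ℕ} (hm : m ≠ 0) (hodd : Odd m) :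
    (2 * m).divisors = m.divisors ∪ m.divisors.image (2 * ·) := by
  classical
  ext d
  simp only [Nat.mem_divisors, Finset.mem_union, Finset.mem_image]
  constructor
  · rintro ⟨hdvd, -⟩
    rcases Nat.even_or_odd d with he | ho
    · obtain ⟨k, hk⟩ := he
      have hd2 : d = 2 * k := by omega
      subst hd2
      have hkm : k ∣ m := (Nat.mul_dvd_mul_iff_left (by norm_num : 0 < 2)).1 hdvd
      exact Or.inr ⟨k, ⟨hkm, hm⟩, rfl⟩
    · left
      refine ⟨?_, hm⟩
      have hcop : Nat.Coprime d 2 := ho.coprime_two_right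
      exact (Nat.Coprime.dvd_mul_left hcop).1 hdvd
  · rintro (⟨hdvd, -⟩ | ⟨k, ⟨hk, -⟩, rfl⟩)
    · exact ⟨Dvd.dvd.mul_left hdvd 2, by simp [hm]⟩
    · exact ⟨mul_dvd_mul_left 2 hk, by simp [hm]⟩

private lemma cyclotomic_two_mul_eval (Q : ℝ) (hQ : 1 < Q) {m : ℕ} (hm : m ≠ 0) (hodd : Odd m) :
    (Polynomial.cyclotomic (2 * m) ℝ).eval Q
      = ∏ d ∈ m.divisors, (Q ^ (m / d) + 1) ^ (moebius d) := by
  classical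
  have hQ0 : (0:ℝ) < Q := lt_trans one_pos hQ
  rw [cyclotomic_eval_eq_prod Q hQ (2 * m) (by positivity)]
  have hdisj : Disjoint m.divisors (m.divisors.image (2 * ·)) := by
    rw [Finset.disjoint_left]
    intro d hd hd2
    obtain ⟨k, hk, rfl⟩ := Finset.mem_image.1 hd2
    have hdvd : 2 * k ∣ m := (Nat.mem_divisors.1 hd).1
    have hev : Even m := by
      obtain ⟨c, hc⟩ := hdvd
      exact hc ▸ ⟨k * c, by ring⟩
    exact (Nat.not_even_iff_odd.2 hodd) hev
  rw [divisors_two_mul_odd hm hodd, Finset.prod_union hdisj,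
    Finset.prod_image (fun x _ y _ h => by omega), ← Finset.prod_mul_distrib]
  refine Finset.prod_congr rfl fun d hd => ?_
  have hddvd : d ∣ m := (Nat.mem_divisors.1 hd).1
  have hd0 : 0 < d := Nat.pos_of_mem_divisors hd
  have hk0 : 0 < m / d := Nat.div_pos (Nat.le_of_dvd (Nat.pos_of_ne_zero hm) hddvd) hd0
  have hdodd : Odd d := by
    rcases Nat.even_or_odd d with he | ho
    · exfalso
      obtain ⟨c, hc⟩ := hddvd
      exact (Nat.not_even_iff_odd.2 hodd) (hc ▸ he.mul_right c)
    · exact ho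
  have hmu2 : moebius (2 * d) = - moebius d := by
    rw [isMultiplicative_moebius.map_mul_of_coprime (Nat.coprime_two_left.2 hdodd),
      moebius_apply_prime Nat.prime_two]
    ring
  have hmd2 : 2 * m / d = 2 * (m / d) := Nat.mul_div_assoc 2 hddvd
  have hmd3 : 2 * m / (2 * d) = m / d := Nat.mul_div_mul_left _ _ (by norm_num : 0 < 2)
  rw [hmd2, hmd3, hmu2]
  have hA1 : Q ^ (m / d) - 1 ≠ 0 := sub_ne_zero.2 (one_lt_pow₀ hQ hk0.ne').ne'
  have hfactor : Q ^ (2 * (m / d)) - 1 = (Q ^ (m / d) - 1) * (Q ^ (m / d) + 1) := by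
    rw [mul_comm 2 (m / d), pow_mul]; ring
  rw [hfactor, mul_zpow, zpow_neg]
  have hz : (Q ^ (m / d) - 1) ^ (moebius d) ≠ 0 := zpow_ne_zero _ hA1
  rw [mul_comm ((Q ^ (m / d) - 1) ^ (moebius d)) ((Q ^ (m / d) + 1) ^ (moebius d)),
    mul_assoc, mul_inv_cancel₀ hz, mul_one]
private lemma totient_eq_sum (n : ℕ) (hn : 0 < n) :
    (n.totient : ℤ) = ∑ d ∈ n.divisors, (moebius d) * ((n / d : ℕ) : ℤ) := by
  have hs : ∀ k : ℕ, k > 0 → ∑ i ∈ k.divisors, ((i.totient : ℤ)) = (k : ℤ) := by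
    intro k _
    exact_mod_cast congrArg (fun t : ℕ => (t : ℤ)) (Nat.sum_totient k)
  have h := (sum_eq_iff_sum_smul_moebius_eq (R := ℤ)
    (f := fun i => (i.totient : ℤ)) (g := fun i => (i : ℤ))).1 hs n hn
  rw [← h, Nat.sum_divisorsAntidiagonal (f := fun d e => moebius d • ((e : ℤ)))]
  simp [zsmul_eq_mul]

private lemma sum_moebius_split (m m₀ e₀ : ℕ) (hm : m ≠ 0) (hm₀ : Squarefree m₀)
    (hm₀m : ∀ d : ℕ, d ∣ m → Squarefree d → d ∣ m₀) (hdvd : m₀ ∣ m)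
    (hmu : moebius m₀ = 1) (he₀ : m = e₀ * m₀) :
    ∑ d ∈ m.divisors, (moebius d) * ((m / d : ℕ) : ℤ) =
      (∑ e ∈ m₀.divisors.filter (fun e => moebius e = 1), ((e₀ * e : ℕ) : ℤ)) -
      (∑ e ∈ m₀.divisors.filter (fun e => moebius e = -1), ((e₀ * e : ℕ) : ℤ)) := by
  classical
  have hm₀0 : m₀ ≠ 0 := hm₀.ne_zero
  have hsub : m₀.divisors ⊆ m.divisors := Nat.divisors_subset_of_dvd hm hdvd
  have step1 : ∑ d ∈ m.divisors, (moebius d) * ((m / d : ℕ) : ℤ)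
      = ∑ d ∈ m₀.divisors, (moebius d) * ((m / d : ℕ) : ℤ) := by
    refine (Finset.sum_subset hsub fun d hd hnd => ?_).symm
    have hsf : ¬ Squarefree d := by
      intro hsf
      exact hnd (Nat.mem_divisors.2 ⟨hm₀m d (Nat.mem_divisors.1 hd).1 hsf, hm₀0⟩)
    rw [moebius_eq_zero_of_not_squarefree hsf, zero_mul]
  have step2 : ∑ d ∈ m₀.divisors, (moebius d) * ((m / d : ℕ) : ℤ)
      = ∑ e ∈ m₀.divisors, (moebius e) * ((e₀ * e : ℕ) : ℤ) := by
    rw [← Nat.sum_div_divisors m₀ (fun e => (moebius e) * ((e₀ * e : ℕ) : ℤ))]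
    refine Finset.sum_congr rfl fun d hd => ?_
    have hddvd : d ∣ m₀ := (Nat.mem_divisors.1 hd).1
    rw [moebius_div_flip hm₀ hmu hddvd, he₀, Nat.mul_div_assoc e₀ hddvd]
  have step3 : ∑ e ∈ m₀.divisors, (moebius e) * ((e₀ * e : ℕ) : ℤ)
      = (∑ e ∈ m₀.divisors.filter (fun e => moebius e = 1), ((e₀ * e : ℕ) : ℤ)) +
        (∑ e ∈ m₀.divisors.filter (fun e => moebius e = -1), (-((e₀ * e : ℕ) : ℤ))) := by
    rw [← Finset.sum_filter_add_sum_filter_not m₀.divisors (fun e => moebius e = 1)]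
    congr 1
    · exact Finset.sum_congr rfl fun e he => by rw [(Finset.mem_filter.1 he).2, one_mul]
    · have hfil : m₀.divisors.filter (fun e => ¬ moebius e = 1)
          = m₀.divisors.filter (fun e => moebius e = -1) := by
        refine Finset.filter_congr fun e he => ?_
        have hsf : Squarefree e := hm₀.squarefree_of_dvd (Nat.mem_divisors.1 he).1
        rcases moebius_pm hsf with h | h <;> simp [h]
      rw [hfil]
      exact Finset.sum_congr rfl fun e he => by rw [(Finset.mem_filter.1 he).2]; ring
  rw [step1, step2, step3, Finset.sum_neg_distrib, sub_eq_add_neg]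


private lemma core_two {Sa Sb w : ℝ} (hw0 : 0 < w) (hSa1 : w ≤ Sa) (hSa4 : Sa ≤ 3/4)
    (hSb5 : Sb ≤ (3/8) * w) : Sb + Sa^2/2 < Sa := by
  nlinarith [mul_le_mul_of_nonneg_right hSa4 (hw0.le.trans hSa1)]

private lemma core_one {Sa Sb Wp x : ℝ} (hx0 : 0 < x) (hx2 : x ≤ 1/2)
    (hSa5 : Sa ≤ x + Wp / 32) (hSb1 : Wp ≤ Sb) (hSb4 : Sb ≤ 3/16) (hSbpos : 0 < Sb) :
    (1 - x) * (1 - Sb + Sb^2/2) < 1 - Sa := by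
  nlinarith [mul_le_mul_of_nonneg_right hx2 hSbpos.le,
    mul_le_mul_of_nonneg_right hSb4 hSbpos.le, mul_nonneg hx0.le (sq_nonneg Sb)]

private lemma core_three {Sa Sb w : ℝ} (hw0 : 0 < w) (hSa1 : w ≤ Sa) (hSa4 : Sa ≤ 3/4)
    (hSb5 : Sb ≤ (3/8) * w) (hSbpos : 0 < Sb) : 1 < (1 + Sa) * (1 - Sb) := by
  nlinarith [mul_le_mul_of_nonneg_right hSa4 hSbpos.le]

private lemma core_four {Sa Sb Wp w x : ℝ} (hWp : 0 < Wp)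
    (hSa5 : Sa ≤ x + Wp / 32) (hSb1 : Wp ≤ Sb)
    (hSaSb : Sa * Sb ≤ (33/32) * w * ((3/2) * Wp)) (hwwp : w * Wp ≤ (1/2) * Wp) :
    (1 - x) < (1 + Sb) * (1 - Sa) := by nlinarith

/-- Let `m ≥ 3` be odd with radical `m₀` (the largest squarefree divisor,
`m₀ = ∏ p ∈ m.primeFactors, p`). If `μ(m₀) = 1`, then for every integer `q ≥ 2`,
`(1 - 1/q) q^φ(m) < Φ_m(q) < q^φ(m) < Φ_{2m}(q) < (1 - 1/q)⁻¹ q^φ(m)`. -/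
theorem cyclotomic_chain_of_moebius_radical_eq_one (m : ℕ) (hm : 3 ≤ m) (hodd : Odd m)
    (hmu : ArithmeticFunction.moebius (∏ p ∈ m.primeFactors, p) = 1)
    (q : ℤ) (hq : 2 ≤ q) :
    (1 - (q : ℝ)⁻¹) * (q : ℝ) ^ m.totient <
      (Polynomial.cyclotomic m ℝ).eval (q : ℝ) ∧
    (Polynomial.cyclotomic m ℝ).eval (q : ℝ) < (q : ℝ) ^ m.totient ∧
    (q : ℝ) ^ m.totient < (Polynomial.cyclotomic (2 * m) ℝ).eval (q : ℝ) ∧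
    (Polynomial.cyclotomic (2 * m) ℝ).eval (q : ℝ) <
      (1 - (q : ℝ)⁻¹)⁻¹ * (q : ℝ) ^ m.totient := by
  classical
  set Q : ℝ := (q : ℝ) with hQdef
  have hQ2 : (2:ℝ) ≤ Q := by rw [hQdef]; exact_mod_cast hq
  have hQ1 : (1:ℝ) < Q := by linarith
  have hQ0 : (0:ℝ) < Q := by linarith
  set x : ℝ := Q⁻¹ with hxdef
  have hx0 : 0 < x := inv_pos.2 hQ0
  have hxQ : Q * x = 1 := mul_inv_cancel₀ hQ0.ne'
  have hx2 : x ≤ 1/2 := by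
    rw [hxdef]
    rw [inv_le_comm₀ hQ0 (by norm_num)] at *
    · linarith
  have hx1 : x < 1 := by linarith
  -- the radical
  set m₀ := ∏ p ∈ m.primeFactors, p with hm₀def
  have hm0 : m ≠ 0 := by omega
  have hprimes : ∀ r ∈ m.primeFactors, r.Prime := fun r hr => Nat.prime_of_mem_primeFactors hr
  have hsf : Squarefree m₀ := squarefree_prod_primes hprimes
  have hm₀0 : m₀ ≠ 0 := hsf.ne_zero
  have hdvd : m₀ ∣ m := Nat.prod_primeFactors_dvd m
  have hm₀m : ∀ d, d ∣ m → Squarefree d → d ∣ m₀ := by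
    intro d hdm hdsf
    have hsub : d.primeFactors ⊆ m.primeFactors := Nat.primeFactors_mono hdm hm0
    calc d = ∏ r ∈ d.primeFactors, r := (Nat.prod_primeFactors_of_squarefree hdsf).symm
      _ ∣ m₀ := Finset.prod_dvd_prod_of_subset _ _ _ hsub
  set e₀ := m / m₀ with he₀def
  have he₀ : m = e₀ * m₀ := by
    rw [he₀def, Nat.div_mul_cancel hdvd]
  have he₀1 : 1 ≤ e₀ := by
    rcases Nat.eq_zero_or_pos e₀ with h | h
    · rw [h] at he₀; omega
    · exact h
  -- two divides nothing
  have h2m : ¬ 2 ∣ m := by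
    intro h2
    obtain ⟨k, rfl⟩ := h2
    exact (Nat.not_even_iff_odd.2 hodd) ⟨k, two_mul k⟩
  have hodd_dvd : ∀ d : ℕ, d ∣ m → Odd d := by
    intro d hd
    rcases Nat.even_or_odd d with he | ho
    · exfalso
      obtain ⟨c, rfl⟩ := hd
      exact (Nat.not_even_iff_odd.2 hodd) (he.mul_right c)
    · exact ho
  -- the smallest prime
  set p := m.minFac with hpdef
  have hpp : p.Prime := Nat.minFac_prime (by omega : m ≠ 1)
  have hp3 : 3 ≤ p := by
    have h2 : 2 ≤ p := hpp.two_le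
    have hne : p ≠ 2 := by
      intro h
      exact h2m (h ▸ Nat.minFac_dvd m)
    omega
  have hppf : p ∈ m.primeFactors := Nat.mem_primeFactors.2 ⟨hpp, Nat.minFac_dvd m, hm0⟩
  have hpm₀ : p ∣ m₀ := Finset.dvd_prod_of_mem _ hppf
  -- the basic quantity
  set w : ℝ := x ^ e₀ with hwdef
  have hw0 : 0 < w := pow_pos hx0 _
  have hwx : w ≤ x := by
    calc w = x ^ e₀ := hwdef
      _ ≤ x ^ 1 := pow_le_pow_of_le_one hx0.le hx1.le he₀1
      _ = x := pow_one x
  have hw2 : w ≤ 1/2 := le_trans hwx hx2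
  have hw1 : w ≤ 1 := by linarith
  -- divisor sets
  set Ea := m₀.divisors.filter (fun e => moebius e = 1) with hEadef
  set Eb := m₀.divisors.filter (fun e => moebius e = -1) with hEbdef
  have h1Ea : 1 ∈ Ea := by
    rw [hEadef]
    exact Finset.mem_filter.2 ⟨Nat.one_mem_divisors.2 hm₀0, moebius_apply_one⟩
  have hpEb : p ∈ Eb := by
    rw [hEbdef]
    exact Finset.mem_filter.2 ⟨Nat.mem_divisors.2 ⟨hpm₀, hm₀0⟩, moebius_apply_prime hpp⟩
  have hEb_ge : ∀ e ∈ Eb, p ≤ e := by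
    intro e he
    rw [hEbdef, Finset.mem_filter] at he
    obtain ⟨hed, hemu⟩ := he
    have hedvd : e ∣ m := (Nat.mem_divisors.1 hed).1.trans hdvd
    have he1 : e ≠ 1 := by
      intro h
      rw [h, moebius_apply_one] at hemu
      norm_num at hemu
    have he0 : 0 < e := Nat.pos_of_mem_divisors hed
    exact Nat.minFac_le_of_dvd (by omega) hedvd
  have hEb_tail : ∀ e ∈ Eb.erase p, p + 2 ≤ e := by
    intro e he
    obtain ⟨hne, heEb⟩ := Finset.mem_erase.1 he
    have h1 := hEb_ge e heEb
    have hedvd : e ∣ m := (Nat.mem_divisors.1 (Finset.mem_filter.1 (hEbdef ▸ heEb)).1).1.trans hdvd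
    have hoe : e % 2 = 1 := Nat.odd_iff.1 (hodd_dvd e hedvd)
    have hop : p % 2 = 1 := Nat.odd_iff.1 (hodd_dvd p (Nat.minFac_dvd m))
    omega
  have hEa_tail : ∀ e ∈ Ea.erase 1, 3 * p ≤ e := by
    intro e he
    obtain ⟨hne, heEa⟩ := Finset.mem_erase.1 he
    rw [hEadef, Finset.mem_filter] at heEa
    obtain ⟨hed, hemu⟩ := heEa
    have hesf : Squarefree e := hsf.squarefree_of_dvd (Nat.mem_divisors.1 hed).1
    have hedvd : e ∣ m := (Nat.mem_divisors.1 hed).1.trans hdvd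
    have he0 : 0 < e := Nat.pos_of_mem_divisors hed
    -- e has an even, positive number of prime factors
    have heven : Even (cardFactors e) := by
      rcases Nat.even_or_odd (cardFactors e) with h | h
      · exact h
      · exfalso
        rw [moebius_apply_of_squarefree hesf, h.neg_one_pow] at hemu
        norm_num at hemu
    have hcard2 : 2 ≤ e.primeFactors.card := by
      have hωΩ : cardDistinctFactors e = cardFactors e :=
        (cardDistinctFactors_eq_cardFactors_iff_squarefree he0.ne').2 hesf
      have hωcard : cardDistinctFactors e = e.primeFactors.card := by
        rw [cardDistinctFactors_apply, ← List.card_toFinset, Nat.toFinset_factors]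
      have hcc : e.primeFactors.card = cardFactors e := by rw [← hωcard, hωΩ]
      have hne0 : e.primeFactors ≠ ∅ := by
        intro h
        rw [Nat.primeFactors_eq_empty] at h
        omega
      have h1le : 1 ≤ e.primeFactors.card := Finset.card_pos.2 (Finset.nonempty_iff_ne_empty.2 hne0)
      rw [hcc] at h1le ⊢
      rcases heven with ⟨k, hk⟩
      omega
    obtain ⟨r, hr, s, hs, hrs⟩ := Finset.one_lt_card.1 hcard2
    have hrp : r.Prime := Nat.prime_of_mem_primeFactors hr
    have hsp : s.Prime := Nat.prime_of_mem_primeFactors hs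
    have hrd : r ∣ e := Nat.dvd_of_mem_primeFactors hr
    have hsd : s ∣ e := Nat.dvd_of_mem_primeFactors hs
    have hrsd : r * s ∣ e := ((Nat.coprime_primes hrp hsp).2 hrs).mul_dvd_of_dvd_of_dvd hrd hsd
    have hle : r * s ≤ e := Nat.le_of_dvd he0 hrsd
    have hr3 : 3 ≤ r := by
      have h2 : 2 ≤ r := hrp.two_le
      have : r % 2 = 1 := Nat.odd_iff.1 (hodd_dvd r (hrd.trans hedvd))
      omega
    have hsge : p ≤ s := Nat.minFac_le_of_dvd hsp.two_le (hsd.trans hedvd)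
    calc 3 * p ≤ r * s := Nat.mul_le_mul hr3 hsge
      _ ≤ e := hle
  -- sums
  set Sa := ∑ e ∈ Ea, w ^ e with hSadef
  set Sb := ∑ e ∈ Eb, w ^ e with hSbdef
  have hterm_nonneg : ∀ (F : Finset ℕ), ∀ e ∈ F, (0:ℝ) ≤ w ^ e := fun F e _ => (pow_pos hw0 e).le
  have hterm_le_one : ∀ (F : Finset ℕ), ∀ e ∈ F, w ^ e ≤ 1 := fun F e _ => pow_le_one₀ hw0.le hw1
  have hSa1 : w ≤ Sa := by
    have := Finset.single_le_sum (f := fun e => w ^ e) (fun i _ => (pow_pos hw0 i).le) h1Ea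
    simpa using this
  have hSa2 : Sa ≤ w + 2 * w ^ (3 * p) := by
    rw [hSadef, ← Finset.add_sum_erase _ _ h1Ea, pow_one]
    exact add_le_add le_rfl (tail_sum _ _ w hw0 hw2 hEa_tail)
  have hSb1 : w ^ p ≤ Sb := by
    exact Finset.single_le_sum (f := fun e => w ^ e) (fun i _ => (pow_pos hw0 i).le) hpEb
  have hSb2 : Sb ≤ w ^ p + 2 * w ^ (p + 2) := by
    rw [hSbdef, ← Finset.add_sum_erase _ _ hpEb]
    exact add_le_add le_rfl (tail_sum _ _ w hw0 hw2 hEb_tail)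
  -- power facts
  have hwp0 : 0 < w ^ p := pow_pos hw0 p
  have hwp3 : w ^ p ≤ w ^ 3 := pow_le_pow_of_le_one hw0.le hw1 hp3
  have hw3 : w ^ 3 ≤ w / 4 := by
    nlinarith [mul_le_mul_of_nonneg_right hw2 (mul_nonneg hw0.le hw0.le),
      mul_le_mul_of_nonneg_right hw2 hw0.le]
  have hw38 : w ^ 3 ≤ 1 / 8 := by
    nlinarith [mul_le_mul_of_nonneg_right hw2 (mul_nonneg hw0.le hw0.le),
      mul_le_mul_of_nonneg_right hw2 hw0.le]
  have hw3p : w ^ (3 * p) ≤ w ^ p * (1 / 64) := by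
    have h1 : w ^ (3 * p) = w ^ p * w ^ (2 * p) := by
      rw [← pow_add]; congr 1; ring
    have h2 : w ^ (2 * p) ≤ w ^ 6 := pow_le_pow_of_le_one hw0.le hw1 (by omega)
    have h3 : w ^ 6 ≤ 1 / 64 := by nlinarith [pow_pos hw0 2, pow_pos hw0 3, sq_nonneg (w^3)]
    rw [h1]
    exact mul_le_mul_of_nonneg_left (h2.trans h3) hwp0.le
  have hwp2 : w ^ (p + 2) = w ^ p * w ^ 2 := pow_add w p 2
  have hw21 : w ^ 2 ≤ 1 / 4 := by nlinarith [mul_le_mul_of_nonneg_right hw2 hw0.le]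
  -- derived sum bounds
  have hSb3 : Sb ≤ (3/2) * w ^ p := by
    rw [hwp2] at hSb2
    nlinarith [mul_le_mul_of_nonneg_left hw21 hwp0.le]
  have hSb5 : Sb ≤ (3/8) * w := by linarith [hSb3, hwp3, hw3]
  have hSb4 : Sb ≤ 3 / 16 := by linarith [hSb5, hw2]
  have hSa3 : Sa ≤ (33/32) * w := by linarith [hSa2, hw3p, hwp3, hw3]
  have hSa4 : Sa ≤ 3 / 4 := by linarith [hSa3, hw2]
  have hSa5 : Sa ≤ x + w ^ p / 32 := by linarith [hSa2, hw3p, hwx]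
  have hSapos : 0 < Sa := lt_of_lt_of_le hw0 hSa1
  have hSbpos : 0 < Sb := lt_of_lt_of_le hwp0 hSb1
  -- products
  set Pa := ∏ e ∈ Ea, (1 - w ^ e) with hPadef
  set Pb := ∏ e ∈ Eb, (1 - w ^ e) with hPbdef
  set Qa := ∏ e ∈ Ea, (1 + w ^ e) with hQadef
  set Qb := ∏ e ∈ Eb, (1 + w ^ e) with hQbdef
  have hPa_lb : 1 - Sa ≤ Pa := weier1 Ea _ (hterm_nonneg Ea) (hterm_le_one Ea)
  have hPa_ub : Pa ≤ 1 - Sa + Sa ^ 2 / 2 := weier2 Ea _ (hterm_nonneg Ea) (hterm_le_one Ea)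
  have hPb_lb : 1 - Sb ≤ Pb := weier1 Eb _ (hterm_nonneg Eb) (hterm_le_one Eb)
  have hPb_ub : Pb ≤ 1 - Sb + Sb ^ 2 / 2 := weier2 Eb _ (hterm_nonneg Eb) (hterm_le_one Eb)
  have hQa_lb : 1 + Sa ≤ Qa := weier3 Ea _ (hterm_nonneg Ea)
  have hQa_ub : Qa * (1 - Sa) ≤ 1 := weier4 Ea _ (hterm_nonneg Ea)
  have hQb_lb : 1 + Sb ≤ Qb := weier3 Eb _ (hterm_nonneg Eb)
  have hQb_ub : Qb * (1 - Sb) ≤ 1 := weier4 Eb _ (hterm_nonneg Eb)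
  have hPa_pos : 0 < Pa := by linarith
  have hPb_pos : 0 < Pb := by linarith
  have hQa_pos : 0 < Qa := by linarith
  have hQb_pos : 0 < Qb := by linarith
  -- the four core inequalities
  have I2 : Pa < Pb := by
    have := core_two hw0 hSa1 hSa4 hSb5
    linarith [hPa_ub, hPb_lb]
  have I1 : (1 - x) * Pb < Pa := by
    have step : (1 - x) * Pb ≤ (1 - x) * (1 - Sb + Sb ^ 2 / 2) :=
      mul_le_mul_of_nonneg_left hPb_ub (by linarith)
    have := core_one hx0 hx2 hSa5 hSb1 hSb4 hSbpos
    linarith [hPa_lb]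
  have I3 : Qb < Qa := by
    have h1 : (1:ℝ) < (1 + Sa) * (1 - Sb) := core_three hw0 hSa1 hSa4 hSb5 hSbpos
    have h2 : Qb * (1 - Sb) < Qa * (1 - Sb) := by
      calc Qb * (1 - Sb) ≤ 1 := hQb_ub
        _ < (1 + Sa) * (1 - Sb) := h1
        _ ≤ Qa * (1 - Sb) := mul_le_mul_of_nonneg_right hQa_lb (by linarith)
    exact lt_of_mul_lt_mul_right h2 (by linarith)
  have I4 : (1 - x) * Qa < Qb := by
    have hSaSb : Sa * Sb ≤ (33/32) * w * ((3/2) * w ^ p) :=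
      mul_le_mul hSa3 hSb3 hSbpos.le (by positivity)
    have hwwp : w * w ^ p ≤ (1/2) * w ^ p := mul_le_mul_of_nonneg_right hw2 hwp0.le
    have h2 : (1 - x) < (1 + Sb) * (1 - Sa) := core_four hwp0 hSa5 hSb1 hSaSb hwwp
    have h3 : ((1 - x) * Qa) * (1 - Sa) < Qb * (1 - Sa) := by
      calc ((1 - x) * Qa) * (1 - Sa) = (1 - x) * (Qa * (1 - Sa)) := by ring
        _ ≤ (1 - x) * 1 := mul_le_mul_of_nonneg_left hQa_ub (by linarith)
        _ = 1 - x := mul_one _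
        _ < (1 + Sb) * (1 - Sa) := h2
        _ ≤ Qb * (1 - Sa) := mul_le_mul_of_nonneg_right hQb_lb (by linarith)
    exact lt_of_mul_lt_mul_right h3 (by linarith)
  -- key algebraic identities
  set NA := ∑ e ∈ Ea, e₀ * e with hNAdef
  set NB := ∑ e ∈ Eb, e₀ * e with hNBdef
  have htot : NB + m.totient = NA := by
    have h1 := totient_eq_sum m (by omega)
    have h2 := sum_moebius_split m m₀ e₀ hm0 hsf hm₀m hdvd hmu he₀
    rw [h2] at h1
    have hNAZ : (NA : ℤ) = ∑ e ∈ Ea, ((e₀ * e : ℕ) : ℤ) := by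
      rw [hNAdef]; push_cast; ring
    have hNBZ : (NB : ℤ) = ∑ e ∈ Eb, ((e₀ * e : ℕ) : ℤ) := by
      rw [hNBdef]; push_cast; ring
    rw [← hNAZ, ← hNBZ] at h1
    omega
  have hpointA : ∀ e ∈ m₀.divisors, Q ^ (e₀ * e) - 1 = Q ^ (e₀ * e) * (1 - w ^ e) := by
    intro e _
    have hxk : Q ^ (e₀ * e) * w ^ e = 1 := by
      rw [hwdef, ← pow_mul, ← mul_pow, hxQ, one_pow]
    rw [mul_sub, mul_one, hxk]
  have hpointA' : ∀ e ∈ m₀.divisors, Q ^ (e₀ * e) + 1 = Q ^ (e₀ * e) * (1 + w ^ e) := by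
    intro e _
    have hxk : Q ^ (e₀ * e) * w ^ e = 1 := by
      rw [hwdef, ← pow_mul, ← mul_pow, hxQ, one_pow]
    rw [mul_add, mul_one, hxk]
  have hEasub : Ea ⊆ m₀.divisors := Finset.filter_subset _ _
  have hEbsub : Eb ⊆ m₀.divisors := Finset.filter_subset _ _
  have hEaprod : ∏ e ∈ Ea, (Q ^ (e₀ * e) - 1) = Q ^ NA * Pa := by
    calc ∏ e ∈ Ea, (Q ^ (e₀ * e) - 1) = ∏ e ∈ Ea, (Q ^ (e₀ * e) * (1 - w ^ e)) :=
          Finset.prod_congr rfl fun e he => hpointA e (hEasub he)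
      _ = (∏ e ∈ Ea, Q ^ (e₀ * e)) * Pa := Finset.prod_mul_distrib
      _ = Q ^ NA * Pa := by rw [Finset.prod_pow_eq_pow_sum]
  have hEbprod : ∏ e ∈ Eb, (Q ^ (e₀ * e) - 1) = Q ^ NB * Pb := by
    calc ∏ e ∈ Eb, (Q ^ (e₀ * e) - 1) = ∏ e ∈ Eb, (Q ^ (e₀ * e) * (1 - w ^ e)) :=
          Finset.prod_congr rfl fun e he => hpointA e (hEbsub he)
      _ = (∏ e ∈ Eb, Q ^ (e₀ * e)) * Pb := Finset.prod_mul_distrib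
      _ = Q ^ NB * Pb := by rw [Finset.prod_pow_eq_pow_sum]
  have hEaprod' : ∏ e ∈ Ea, (Q ^ (e₀ * e) + 1) = Q ^ NA * Qa := by
    calc ∏ e ∈ Ea, (Q ^ (e₀ * e) + 1) = ∏ e ∈ Ea, (Q ^ (e₀ * e) * (1 + w ^ e)) :=
          Finset.prod_congr rfl fun e he => hpointA' e (hEasub he)
      _ = (∏ e ∈ Ea, Q ^ (e₀ * e)) * Qa := Finset.prod_mul_distrib
      _ = Q ^ NA * Qa := by rw [Finset.prod_pow_eq_pow_sum]
  have hEbprod' : ∏ e ∈ Eb, (Q ^ (e₀ * e) + 1) = Q ^ NB * Qb := by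
    calc ∏ e ∈ Eb, (Q ^ (e₀ * e) + 1) = ∏ e ∈ Eb, (Q ^ (e₀ * e) * (1 + w ^ e)) :=
          Finset.prod_congr rfl fun e he => hpointA' e (hEbsub he)
      _ = (∏ e ∈ Eb, Q ^ (e₀ * e)) * Qb := Finset.prod_mul_distrib
      _ = Q ^ NB * Qb := by rw [Finset.prod_pow_eq_pow_sum]
  have hQNB : (0:ℝ) < Q ^ NB := pow_pos hQ0 _
  have hQphi : (0:ℝ) < Q ^ m.totient := pow_pos hQ0 _
  have hNApow : Q ^ NA = Q ^ NB * Q ^ m.totient := by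
    rw [← pow_add, htot]
  -- the cyclotomic value identities
  have hcyc_m : (Polynomial.cyclotomic m ℝ).eval Q * (Q ^ NB * Pb) = Q ^ NA * Pa := by
    have h := cyclotomic_eval_eq_prod Q hQ1 m (by omega)
    rw [prod_moebius_split m m₀ e₀ hm0 hsf hm₀m hdvd hmu he₀ (fun n => Q ^ n - 1)] at h
    rw [h, hEaprod, hEbprod, div_mul_cancel₀]
    positivity
  have hcyc_2m : (Polynomial.cyclotomic (2 * m) ℝ).eval Q * (Q ^ NB * Qb) = Q ^ NA * Qa := by
    have h := cyclotomic_two_mul_eval Q hQ1 hm0 hodd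
    rw [prod_moebius_split m m₀ e₀ hm0 hsf hm₀m hdvd hmu he₀ (fun n => Q ^ n + 1)] at h
    rw [h, hEaprod', hEbprod', div_mul_cancel₀]
    positivity
  have hΦm : (Polynomial.cyclotomic m ℝ).eval Q * Pb = Q ^ m.totient * Pa := by
    have := hcyc_m
    rw [hNApow] at this
    have h2 : ((Polynomial.cyclotomic m ℝ).eval Q * Pb) * Q ^ NB
        = (Q ^ m.totient * Pa) * Q ^ NB := by linear_combination this
    exact mul_right_cancel₀ hQNB.ne' h2
  have hΦ2m : (Polynomial.cyclotomic (2 * m) ℝ).eval Q * Qb = Q ^ m.totient * Qa := by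
    have := hcyc_2m
    rw [hNApow] at this
    have h2 : ((Polynomial.cyclotomic (2 * m) ℝ).eval Q * Qb) * Q ^ NB
        = (Q ^ m.totient * Qa) * Q ^ NB := by linear_combination this
    exact mul_right_cancel₀ hQNB.ne' h2
  -- conclude
  have hx1' : (0:ℝ) < 1 - x := by linarith
  refine ⟨?_, ?_, ?_, ?_⟩
  · -- (1-x) Q^φ < Φ_m
    have h : ((1 - x) * Q ^ m.totient) * Pb < (Polynomial.cyclotomic m ℝ).eval Q * Pb := by
      rw [hΦm]
      calc ((1 - x) * Q ^ m.totient) * Pb = Q ^ m.totient * ((1 - x) * Pb) := by ring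
        _ < Q ^ m.totient * Pa := by
            exact mul_lt_mul_of_pos_left I1 hQphi
    exact lt_of_mul_lt_mul_right h hPb_pos.le
  · -- Φ_m < Q^φ
    have h : (Polynomial.cyclotomic m ℝ).eval Q * Pb < Q ^ m.totient * Pb := by
      rw [hΦm]
      exact mul_lt_mul_of_pos_left I2 hQphi
    exact lt_of_mul_lt_mul_right h hPb_pos.le
  · -- Q^φ < Φ_2m
    have h : Q ^ m.totient * Qb < (Polynomial.cyclotomic (2 * m) ℝ).eval Q * Qb := by
      rw [hΦ2m]
      exact mul_lt_mul_of_pos_left I3 hQphi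
    exact lt_of_mul_lt_mul_right h hQb_pos.le
  · -- Φ_2m < (1-x)⁻¹ Q^φ
    have h : ((Polynomial.cyclotomic (2 * m) ℝ).eval Q * (1 - x)) * Qb
        < Q ^ m.totient * Qb := by
      calc ((Polynomial.cyclotomic (2 * m) ℝ).eval Q * (1 - x)) * Qb
          = (1 - x) * ((Polynomial.cyclotomic (2 * m) ℝ).eval Q * Qb) := by ring
        _ = (1 - x) * (Q ^ m.totient * Qa) := by rw [hΦ2m]
        _ = Q ^ m.totient * ((1 - x) * Qa) := by ring
        _ < Q ^ m.totient * Qb := mul_lt_mul_of_pos_left I4 hQphi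
    have h2 : (Polynomial.cyclotomic (2 * m) ℝ).eval Q * (1 - x) < Q ^ m.totient :=
      lt_of_mul_lt_mul_right h hQb_pos.le
    rw [inv_mul_eq_div, lt_div_iff₀ hx1']
    linarith [h2]
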